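/- Let k be a field, H a commutative k-bialgebra, and (M,·,ρ) a left-right H-Hopf module: M is a left H-module (with k-linear action), a right H-comodule via ρ : M → M⊗H written ρ(m) = Σ m₍₀₎⊗m₍₁₎, and the compatibility ρ(h·m) = Σ h₍₁₎·m₍₀₎ ⊗ h₍₂₎m₍₁₎ holds for all h ∈ H, m ∈ M. Then the map R := R_{(M,·,ρ)} : M⊗M → M⊗M, R(m⊗n) = Σ n₍₁₎·m ⊗ n₍₀₎, is a commutative solution of the Hopf equation: R¹²R²³ = R²³R¹³R¹² and R¹²R¹³ = R¹³R¹². -/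
import Mathlib


open TensorProduct LinearMap

section HopfEq

variable (k V : Type*) [Field k] [AddCommGroup V] [Module k V]

/-- The flip map `τ : V ⊗ V → V ⊗ V`, `τ(v ⊗ w) = w ⊗ v`. -/
noncomputable def flipMap : V ⊗[k] V →ₗ[k] V ⊗[k] V :=
  (TensorProduct.comm k V V).toLinearMap

variable {k V}

/-- `R¹² = R ⊗ I` as an endomorphism of `V ⊗ V ⊗ V`. -/
noncomputable def map12 (R : V ⊗[k] V →ₗ[k] V ⊗[k] V) :
    V ⊗[k] (V ⊗[k] V) →ₗ[k] V ⊗[k] (V ⊗[k] V) :=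
  (TensorProduct.assoc k V V V).toLinearMap ∘ₗ R.rTensor V ∘ₗ
    (TensorProduct.assoc k V V V).symm.toLinearMap

/-- `R²³ = I ⊗ R` as an endomorphism of `V ⊗ V ⊗ V`. -/
noncomputable def map23 (R : V ⊗[k] V →ₗ[k] V ⊗[k] V) :
    V ⊗[k] (V ⊗[k] V) →ₗ[k] V ⊗[k] (V ⊗[k] V) :=
  R.lTensor V

/-- `R¹³ = (I ⊗ τ)(R ⊗ I)(I ⊗ τ)` as an endomorphism of `V ⊗ V ⊗ V`. -/
noncomputable def map13 (R : V ⊗[k] V →ₗ[k] V ⊗[k] V) :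
    V ⊗[k] (V ⊗[k] V) →ₗ[k] V ⊗[k] (V ⊗[k] V) :=
  (flipMap k V).lTensor V ∘ₗ map12 R ∘ₗ (flipMap k V).lTensor V

/-- `R` is a solution of the Hopf equation: `R¹²R²³ = R²³R¹³R¹²`. -/
def IsHopfSolution (R : V ⊗[k] V →ₗ[k] V ⊗[k] V) : Prop :=
  map12 R ∘ₗ map23 R = map23 R ∘ₗ map13 R ∘ₗ map12 R

/-- `R` is a solution of the pentagonal equation: `R¹²R¹³R²³ = R²³R¹²`. -/
def IsPentagonSolution (R : V ⊗[k] V →ₗ[k] V ⊗[k] V) : Prop :=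
  map12 R ∘ₗ map13 R ∘ₗ map23 R = map23 R ∘ₗ map12 R

end HopfEq

variable (k H M : Type*) [Field k] [CommRing H] [Bialgebra k H] [AddCommGroup M] [Module k M]

/-- For a left action `μ : H ⊗ M → M` and a coaction `ρ : M → M ⊗ H`,
`ρ(m) = Σ m₍₀₎ ⊗ m₍₁₎`, the map `R : M ⊗ M → M ⊗ M`, `R(m ⊗ n) = Σ n₍₁₎·m ⊗ n₍₀₎`. -/
noncomputable def hopfModuleMap (μ : H ⊗[k] M →ₗ[k] M) (ρ : M →ₗ[k] M ⊗[k] H) :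
    M ⊗[k] M →ₗ[k] M ⊗[k] M :=
  μ.rTensor M ∘ₗ ((TensorProduct.comm k M H).toLinearMap.rTensor M) ∘ₗ
    (TensorProduct.assoc k M H M).symm.toLinearMap ∘ₗ
    ((TensorProduct.comm k M H).toLinearMap.lTensor M) ∘ₗ ρ.lTensor M

namespace HopfAux
variable {k H M : Type*} [Field k] [CommRing H] [Bialgebra k H] [AddCommGroup M] [Module k M]
variable (μ : H ⊗[k] M →ₗ[k] M) (ρ : M →ₗ[k] M ⊗[k] H)

noncomputable def Psi : M ⊗[k] (M ⊗[k] H) →ₗ[k] M ⊗[k] M :=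
  μ.rTensor M ∘ₗ ((TensorProduct.comm k M H).toLinearMap.rTensor M) ∘ₗ
    (TensorProduct.assoc k M H M).symm.toLinearMap ∘ₗ
    ((TensorProduct.comm k M H).toLinearMap.lTensor M)

@[simp] lemma Psi_tmul (a b : M) (h : H) :
    Psi μ (a ⊗ₜ[k] (b ⊗ₜ[k] h)) = μ (h ⊗ₜ[k] a) ⊗ₜ[k] b := by simp [Psi]

lemma R_eq : hopfModuleMap k H M μ ρ = Psi μ ∘ₗ ρ.lTensor M := rfl

@[simp] lemma R_tmul (a b : M) :
    hopfModuleMap k H M μ ρ (a ⊗ₜ[k] b) = Psi μ (a ⊗ₜ[k] ρ b) := by rw [R_eq]; simp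

lemma map12_tmul (R : M ⊗[k] M →ₗ[k] M ⊗[k] M) (a b c : M) :
    map12 R (a ⊗ₜ[k] (b ⊗ₜ[k] c))
      = (TensorProduct.assoc k M M M) (R (a ⊗ₜ[k] b) ⊗ₜ[k] c) := by simp [map12]

lemma map13_tmul (R : M ⊗[k] M →ₗ[k] M ⊗[k] M) (a b c : M) :
    map13 R (a ⊗ₜ[k] (b ⊗ₜ[k] c))
      = (flipMap k M).lTensor M (map12 R (a ⊗ₜ[k] (c ⊗ₜ[k] b))) := by
  simp [map13, flipMap]

noncomputable def Emap : (H ⊗[k] H) ⊗[k] (M ⊗[k] H) →ₗ[k] M ⊗[k] H :=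
  TensorProduct.map μ (LinearMap.mul' k H) ∘ₗ
    (TensorProduct.tensorTensorTensorComm k H H M H).toLinearMap

@[simp] lemma Emap_tmul (g h : H) (y : M) (e : H) :
    Emap μ ((g ⊗ₜ[k] h) ⊗ₜ[k] (y ⊗ₜ[k] e)) = μ (g ⊗ₜ[k] y) ⊗ₜ[k] (h * e) := by
  simp [Emap]

lemma compat_apply
    (hcompat : ρ ∘ₗ μ = TensorProduct.map μ (LinearMap.mul' k H) ∘ₗ
        (TensorProduct.tensorTensorTensorComm k H H M H).toLinearMap ∘ₗ
        TensorProduct.map (Coalgebra.comul (R := k)) ρ)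
    (h : H) (n : M) :
    ρ (μ (h ⊗ₜ[k] n)) = Emap μ ((Coalgebra.comul (R := k) h) ⊗ₜ[k] ρ n) := by
  have := congrArg (fun f => f (h ⊗ₜ[k] n)) hcompat
  simpa [Emap] using this

noncomputable def Dmap (m : M) (s : M ⊗[k] H) : H ⊗[k] H →ₗ[k] M ⊗[k] M :=
  Psi μ ∘ₗ TensorProduct.mk k M (M ⊗[k] H) m ∘ₗ Emap μ ∘ₗ
    (TensorProduct.mk k (H ⊗[k] H) (M ⊗[k] H)).flip s

@[simp] lemma Dmap_apply (m : M) (s : M ⊗[k] H) (c : H ⊗[k] H) :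
    Dmap μ m s c = Psi μ (m ⊗ₜ[k] Emap μ (c ⊗ₜ[k] s)) := rfl

noncomputable def Amap (m : M) (s : M ⊗[k] H) :
    M ⊗[k] (H ⊗[k] H) →ₗ[k] M ⊗[k] (M ⊗[k] M) :=
  (TensorProduct.assoc k M M M).toLinearMap ∘ₗ (Dmap μ m s).rTensor M ∘ₗ
    (TensorProduct.comm k M (H ⊗[k] H)).toLinearMap

@[simp] lemma Amap_tmul (m : M) (s : M ⊗[k] H) (x : M) (c : H ⊗[k] H) :
    Amap μ m s (x ⊗ₜ[k] c)
      = (TensorProduct.assoc k M M M) (Dmap μ m s c ⊗ₜ[k] x) := by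
  simp [Amap]

noncomputable def Ymap : (M ⊗[k] M) ⊗[k] (M ⊗[k] H) →ₗ[k] M ⊗[k] (M ⊗[k] M) :=
  (flipMap k M).lTensor M ∘ₗ (TensorProduct.assoc k M M M).toLinearMap ∘ₗ
    (Psi μ).rTensor M ∘ₗ
    (TensorProduct.assoc k M (M ⊗[k] H) M).symm.toLinearMap ∘ₗ
    ((TensorProduct.comm k M (M ⊗[k] H)).toLinearMap.lTensor M) ∘ₗ
    (TensorProduct.assoc k M M (M ⊗[k] H)).toLinearMap

@[simp] lemma Ymap_tmul (a b : M) (t : M ⊗[k] H) :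
    Ymap μ ((a ⊗ₜ[k] b) ⊗ₜ[k] t)
      = (flipMap k M).lTensor M
          ((TensorProduct.assoc k M M M) (Psi μ (a ⊗ₜ[k] t) ⊗ₜ[k] b)) := by
  simp [Ymap]

noncomputable def Kmap : (M ⊗[k] M) ⊗[k] ((M ⊗[k] H) ⊗[k] H) →ₗ[k] M ⊗[k] (M ⊗[k] M) :=
  TensorProduct.map μ (Psi μ) ∘ₗ
    ((TensorProduct.comm k M H).toLinearMap.rTensor (M ⊗[k] (M ⊗[k] H))) ∘ₗ
    (TensorProduct.tensorTensorTensorComm k M M H (M ⊗[k] H)).toLinearMap ∘ₗ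
    ((TensorProduct.comm k (M ⊗[k] H) H).toLinearMap.lTensor (M ⊗[k] M))

@[simp] lemma Kmap_tmul (a b : M) (v : M ⊗[k] H) (g : H) :
    Kmap μ ((a ⊗ₜ[k] b) ⊗ₜ[k] (v ⊗ₜ[k] g))
      = μ (g ⊗ₜ[k] a) ⊗ₜ[k] Psi μ (b ⊗ₜ[k] v) := by
  simp [Kmap]

@[simp] lemma Dmap_add (m : M) (s1 s2 : M ⊗[k] H) :
    Dmap μ m (s1 + s2) = Dmap μ m s1 + Dmap μ m s2 :=
  LinearMap.ext fun c => by simp [tmul_add]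

@[simp] lemma Amap_add_apply (m : M) (s1 s2 : M ⊗[k] H) (u : M ⊗[k] (H ⊗[k] H)) :
    Amap μ m (s1 + s2) u = Amap μ m s1 u + Amap μ m s2 u := by
  simp [Amap, Dmap_add, LinearMap.rTensor_add]

noncomputable def Nmap (m : M) (s : M ⊗[k] H) : H →ₗ[k] M ⊗[k] M :=
  Psi μ ∘ₗ (TensorProduct.mk k M (M ⊗[k] H)).flip s ∘ₗ μ ∘ₗ
    (TensorProduct.mk k H M).flip m

@[simp] lemma Nmap_apply (m : M) (s : M ⊗[k] H) (g : H) :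
    Nmap μ m s g = Psi μ (μ (g ⊗ₜ[k] m) ⊗ₜ[k] s) := rfl

@[simp] lemma Nmap_add (m : M) (s1 s2 : M ⊗[k] H) :
    Nmap μ m (s1 + s2) = Nmap μ m s1 + Nmap μ m s2 :=
  LinearMap.ext fun g => by simp [tmul_add]

noncomputable def Wmap (m : M) (s : M ⊗[k] H) : M ⊗[k] H →ₗ[k] M ⊗[k] (M ⊗[k] M) :=
  (TensorProduct.assoc k M M M).toLinearMap ∘ₗ
    (Nmap μ m s).rTensor M ∘ₗ
    (TensorProduct.comm k M H).toLinearMap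

@[simp] lemma Wmap_add_apply (m : M) (s1 s2 : M ⊗[k] H) (u : M ⊗[k] H) :
    Wmap μ m (s1 + s2) u = Wmap μ m s1 u + Wmap μ m s2 u := by
  simp [Wmap, Nmap_add, LinearMap.rTensor_add]

@[simp] lemma Wmap_tmul (m : M) (s : M ⊗[k] H) (x : M) (g : H) :
    Wmap μ m s (x ⊗ₜ[k] g)
      = (TensorProduct.assoc k M M M) (Psi μ (μ (g ⊗ₜ[k] m) ⊗ₜ[k] s) ⊗ₜ[k] x) := by
  simp [Wmap]

lemma lemL
    (hcompat : ρ ∘ₗ μ = TensorProduct.map μ (LinearMap.mul' k H) ∘ₗ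
        (TensorProduct.tensorTensorTensorComm k H H M H).toLinearMap ∘ₗ
        TensorProduct.map (Coalgebra.comul (R := k)) ρ)
    (m n : M) :
    map12 (hopfModuleMap k H M μ ρ) ∘ₗ TensorProduct.mk k M (M ⊗[k] M) m ∘ₗ
        Psi μ ∘ₗ TensorProduct.mk k M (M ⊗[k] H) n
      = Amap μ m (ρ n) ∘ₗ (Coalgebra.comul (R := k)).lTensor M := by
  apply TensorProduct.ext'
  intro a h
  simp [map12_tmul, compat_apply μ ρ hcompat]

lemma lemP13 (q : M ⊗[k] M) (c : M) :
    map13 (hopfModuleMap k H M μ ρ) ((TensorProduct.assoc k M M M) (q ⊗ₜ[k] c))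
      = Ymap μ (q ⊗ₜ[k] ρ c) := by
  induction q using TensorProduct.induction_on with
  | zero => simp
  | tmul a b => simp [map13_tmul, map12_tmul]
  | add q1 q2 h1 h2 => simp [add_tmul, map_add, h1, h2]

lemma lemP23 (q : M ⊗[k] M) (t : M ⊗[k] H) :
    map23 (hopfModuleMap k H M μ ρ) (Ymap μ (q ⊗ₜ[k] t))
      = Kmap μ (q ⊗ₜ[k] ρ.rTensor H t) := by
  induction q using TensorProduct.induction_on with
  | zero => simp
  | tmul a b =>
    induction t using TensorProduct.induction_on with
    | zero => simp
    | tmul x g => simp [map23, flipMap]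
    | add t1 t2 h1 h2 => simp only [tmul_add, map_add, h1, h2]
  | add q1 q2 h1 h2 => simp only [add_tmul, map_add, h1, h2]

lemma lemC
    (hμ_mul : ∀ (a b : H) (m : M), μ ((a * b) ⊗ₜ[k] m) = μ (a ⊗ₜ[k] μ (b ⊗ₜ[k] m)))
    (m : M) (s : M ⊗[k] H) :
    Amap μ m s ∘ₗ (TensorProduct.assoc k M H H).toLinearMap
      = Kmap μ ∘ₗ TensorProduct.mk k (M ⊗[k] M) ((M ⊗[k] H) ⊗[k] H) (Psi μ (m ⊗ₜ[k] s)) := by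
  apply TensorProduct.ext'
  intro v g
  induction v using TensorProduct.induction_on with
  | zero => simp
  | tmul x c =>
    induction s using TensorProduct.induction_on with
    | zero => simp
    | tmul y e => simp [hμ_mul]
    | add s1 s2 h1 h2 =>
      simp only [comp_apply, Amap_add_apply, tmul_add, add_tmul, map_add,
        LinearMap.add_apply] at h1 h2 ⊢
      rw [h1, h2]
  | add v1 v2 h1 h2 => simp only [tmul_add, add_tmul, map_add, h1, h2]

lemma lemC2a (m n : M) (t : M ⊗[k] H) :
    map12 (hopfModuleMap k H M μ ρ)
        ((flipMap k M).lTensor M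
          ((TensorProduct.assoc k M M M) (Psi μ (m ⊗ₜ[k] t) ⊗ₜ[k] n)))
      = Wmap μ m (ρ n) t := by
  induction t using TensorProduct.induction_on with
  | zero => simp
  | tmul x g => simp [flipMap, map12_tmul]
  | add t1 t2 h1 h2 => simp only [tmul_add, add_tmul, map_add, h1, h2]

lemma lemC2b
    (hμ_mul : ∀ (a b : H) (m : M), μ ((a * b) ⊗ₜ[k] m) = μ (a ⊗ₜ[k] μ (b ⊗ₜ[k] m)))
    (m : M) (s t : M ⊗[k] H) :
    Wmap μ m s t = Ymap μ (Psi μ (m ⊗ₜ[k] s) ⊗ₜ[k] t) := by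
  induction t using TensorProduct.induction_on with
  | zero => simp
  | tmul x g =>
    induction s using TensorProduct.induction_on with
    | zero => simp
    | tmul y e =>
      simp only [Wmap_tmul, Psi_tmul, Ymap_tmul, flipMap]
      rw [← hμ_mul, ← hμ_mul, mul_comm]
      simp
    | add s1 s2 h1 h2 =>
      simp only [Wmap_add_apply, tmul_add, add_tmul, map_add] at h1 h2 ⊢
      rw [h1, h2]
  | add t1 t2 h1 h2 => simp only [tmul_add, add_tmul, map_add, h1, h2]

end HopfAux

/-- if `H` is a commutative bialgebra and `(M, μ, ρ)` is a left-right
`H`-Hopf module, then the map `R(m ⊗ n) = Σ n₍₁₎·m ⊗ n₍₀₎` is a commutative solution of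
the Hopf equation: `R¹²R²³ = R²³R¹³R¹²` and `R¹²R¹³ = R¹³R¹²`. -/
theorem hopfModuleMap_commutative_isHopfSolution (μ : H ⊗[k] M →ₗ[k] M)
    (ρ : M →ₗ[k] M ⊗[k] H)
    (hμ_one : ∀ m : M, μ ((1 : H) ⊗ₜ[k] m) = m)
    (hμ_mul : ∀ (a b : H) (m : M), μ ((a * b) ⊗ₜ[k] m) = μ (a ⊗ₜ[k] μ (b ⊗ₜ[k] m)))
    (hρ_coassoc : (TensorProduct.assoc k M H H).toLinearMap ∘ₗ ρ.rTensor H ∘ₗ ρ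
        = (Coalgebra.comul (R := k)).lTensor M ∘ₗ ρ)
    (hρ_counit : (TensorProduct.rid k M).toLinearMap ∘ₗ
        (Coalgebra.counit (R := k)).lTensor M ∘ₗ ρ = LinearMap.id)
    (hcompat : ρ ∘ₗ μ = TensorProduct.map μ (LinearMap.mul' k H) ∘ₗ
        (TensorProduct.tensorTensorTensorComm k H H M H).toLinearMap ∘ₗ
        TensorProduct.map (Coalgebra.comul (R := k)) ρ) :
    IsHopfSolution (hopfModuleMap k H M μ ρ) ∧
      map12 (hopfModuleMap k H M μ ρ) ∘ₗ map13 (hopfModuleMap k H M μ ρ)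
        = map13 (hopfModuleMap k H M μ ρ) ∘ₗ map12 (hopfModuleMap k H M μ ρ) := by
  classical
  open HopfAux in
  constructor
  · unfold IsHopfSolution
    apply TensorProduct.ext'
    intro m y
    induction y using TensorProduct.induction_on with
    | zero => simp
    | tmul n p =>
      have e1 : (map12 (hopfModuleMap k H M μ ρ) ∘ₗ map23 (hopfModuleMap k H M μ ρ))
            (m ⊗ₜ[k] (n ⊗ₜ[k] p))
          = map12 (hopfModuleMap k H M μ ρ) (m ⊗ₜ[k] Psi μ (n ⊗ₜ[k] ρ p)) := by
        simp [map23]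
      have e2 : map12 (hopfModuleMap k H M μ ρ) (m ⊗ₜ[k] Psi μ (n ⊗ₜ[k] ρ p))
          = Amap μ m (ρ n) ((Coalgebra.comul (R := k)).lTensor M (ρ p)) := by
        have := congrArg (fun f => f (ρ p)) (lemL μ ρ hcompat m n)
        simpa using this
      have e3 : (Coalgebra.comul (R := k)).lTensor M (ρ p)
          = (TensorProduct.assoc k M H H) (ρ.rTensor H (ρ p)) := by
        have := congrArg (fun f => f p) hρ_coassoc
        simpa using this.symm
      have e4 : Amap μ m (ρ n) ((TensorProduct.assoc k M H H) (ρ.rTensor H (ρ p)))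
          = Kmap μ (Psi μ (m ⊗ₜ[k] ρ n) ⊗ₜ[k] ρ.rTensor H (ρ p)) := by
        have := congrArg (fun f => f (ρ.rTensor H (ρ p))) (lemC μ hμ_mul m (ρ n))
        simpa using this
      have e5 : (map23 (hopfModuleMap k H M μ ρ) ∘ₗ map13 (hopfModuleMap k H M μ ρ) ∘ₗ
            map12 (hopfModuleMap k H M μ ρ)) (m ⊗ₜ[k] (n ⊗ₜ[k] p))
          = map23 (hopfModuleMap k H M μ ρ) (map13 (hopfModuleMap k H M μ ρ)
              ((TensorProduct.assoc k M M M) (Psi μ (m ⊗ₜ[k] ρ n) ⊗ₜ[k] p))) := by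
        simp [map12_tmul]
      rw [e1, e2, e3, e4, e5, lemP13, lemP23]
    | add y1 y2 h1 h2 => simp only [tmul_add, map_add, h1, h2]
  · apply TensorProduct.ext'
    intro m y
    induction y using TensorProduct.induction_on with
    | zero => simp
    | tmul n p =>
      have e1 : (map12 (hopfModuleMap k H M μ ρ) ∘ₗ map13 (hopfModuleMap k H M μ ρ))
            (m ⊗ₜ[k] (n ⊗ₜ[k] p))
          = map12 (hopfModuleMap k H M μ ρ)
              ((flipMap k M).lTensor M ((TensorProduct.assoc k M M M)
                (Psi μ (m ⊗ₜ[k] ρ p) ⊗ₜ[k] n))) := by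
        simp [map13_tmul, map12_tmul]
      have e2 : (map13 (hopfModuleMap k H M μ ρ) ∘ₗ map12 (hopfModuleMap k H M μ ρ))
            (m ⊗ₜ[k] (n ⊗ₜ[k] p))
          = map13 (hopfModuleMap k H M μ ρ)
              ((TensorProduct.assoc k M M M) (Psi μ (m ⊗ₜ[k] ρ n) ⊗ₜ[k] p)) := by
        simp [map12_tmul]
      rw [e1, e2, lemC2a, lemC2b μ hμ_mul, lemP13]
    | add y1 y2 h1 h2 => simp only [tmul_add, map_add, h1, h2]
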